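/- Let T be a spanning tree of a graph whose vertex set contains an independent set B with |B| = m + k, where the total number of vertices is 2m + k. Then T has at least k + 1 leaves lying in B; in particular T has more than k leaves. -/

import Mathlib

set_option maxHeartbeats 1000000


open SimpleGraph

theorem stmt_4 {V : Type*} [Fintype V] (T : SimpleGraph V) (m k : ℕ)
    (hm : 1 ≤ m) (hk : 2 ≤ k)
    (hT : T.IsTree) (hcard : Fintype.card V = 2 * m + k)
    (B : Set V) (hB : B.ncard = m + k)
    (hBindep : ∀ x ∈ B, ∀ y ∈ B, ¬T.Adj x y) :
    k + 1 ≤ {x ∈ B | (T.neighborSet x).ncard = 1}.ncard ∧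
    k < {x : V | (T.neighborSet x).ncard = 1}.ncard := by
  classical
  have hns : ∀ x : V, (T.neighborSet x).ncard = T.degree x := by
    intro x
    rw [SimpleGraph.degree, SimpleGraph.neighborFinset_def, ← Set.ncard_eq_toFinset_card']
  -- every vertex has positive degree
  have hdegpos : ∀ x : V, 0 < T.degree x := by
    intro x
    obtain ⟨y, hy⟩ := Fintype.exists_ne_of_one_lt_card (by omega) x
    obtain ⟨p⟩ := hT.isConnected.preconnected x y
    have hnil : ¬ p.Nil := SimpleGraph.Walk.not_nil_of_ne (Ne.symm hy)
    exact (T.degree_pos_iff_exists_adj x).mpr ⟨_, p.adj_snd hnil⟩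
  set Bf : Finset V := B.toFinite.toFinset with hBfdef
  have hmemBf : ∀ x, x ∈ Bf ↔ x ∈ B := fun x => B.toFinite.mem_toFinset
  have hBfcard : Bf.card = m + k := by
    rw [← Set.ncard_eq_toFinset_card _ B.toFinite]; exact hB
  set L : Finset V := Bf.filter (fun x => T.degree x = 1) with hLdef
  have hLsub : L ⊆ Bf := Finset.filter_subset _ _
  -- upper bound: sum of degrees over B ≤ number of edges
  have hsum_le : ∑ x ∈ Bf, T.degree x ≤ T.edgeFinset.card := by
    have hcs : (Bf.sigma (fun x => T.neighborFinset x)).card = ∑ x ∈ Bf, T.degree x :=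
      Finset.card_sigma _ _
    rw [← hcs]
    apply Finset.card_le_card_of_injOn (fun p => s(p.1, p.2))
    · intro p hp
      rw [Finset.mem_coe, Finset.mem_sigma] at hp
      rw [Finset.mem_coe, SimpleGraph.mem_edgeFinset]
      exact (T.mem_neighborFinset _ _).1 hp.2
    · intro p hp q hq he
      rw [Finset.coe_sigma, Set.mem_sigma_iff] at hp hq
      have hpadj : T.Adj p.1 p.2 := (T.mem_neighborFinset _ _).1 hp.2
      have hqadj : T.Adj q.1 q.2 := (T.mem_neighborFinset _ _).1 hq.2
      simp only [Sym2.eq, Sym2.rel_iff', Prod.mk.injEq, Prod.swap_prod_mk] at he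
      rcases he with ⟨h1, h2⟩ | ⟨h1, h2⟩
      · exact Sigma.ext h1 (heq_of_eq h2)
      · exfalso
        apply hBindep p.1 ((hmemBf p.1).1 hp.1) q.1 ((hmemBf q.1).1 hq.1)
        rw [h2] at hpadj
        exact hpadj
  have hedge : T.edgeFinset.card + 1 = Fintype.card V := hT.card_edgeFinset
  -- lower bound on the sum
  have hsum_ge : (Bf \ L).card * 2 + L.card ≤ ∑ x ∈ Bf, T.degree x := by
    have hsplit : ∑ x ∈ Bf, T.degree x
        = ∑ x ∈ Bf \ L, T.degree x + ∑ x ∈ L, T.degree x :=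
      (Finset.sum_sdiff hLsub).symm
    have h1 : ∑ x ∈ L, T.degree x = L.card := by
      rw [Finset.sum_congr rfl (fun x hx => (Finset.mem_filter.1 hx).2), Finset.sum_const,
        smul_eq_mul, mul_one]
    have h2 : (Bf \ L).card * 2 ≤ ∑ x ∈ Bf \ L, T.degree x := by
      have := Finset.card_nsmul_le_sum (Bf \ L) (fun x => T.degree x) 2 (fun x hx => by
        rw [Finset.mem_sdiff, hLdef, Finset.mem_filter] at hx
        have h3 := hdegpos x
        have h4 : T.degree x ≠ 1 := fun h => hx.2 ⟨hx.1, h⟩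
        show 2 ≤ T.degree x
        omega)
      simpa using this
    omega
  have hLcard : k + 1 ≤ L.card := by
    have hsd : (Bf \ L).card = Bf.card - L.card := Finset.card_sdiff_of_subset hLsub
    have hLle : L.card ≤ Bf.card := Finset.card_le_card hLsub
    omega
  have hSeq : {x ∈ B | (T.neighborSet x).ncard = 1} = (L : Set V) := by
    ext x
    rw [Set.mem_setOf_eq, Finset.mem_coe, hLdef, Finset.mem_filter, hmemBf x, hns x]
  constructor
  · rw [hSeq, Set.ncard_coe_finset]; exact hLcard
  · have hsub : {x ∈ B | (T.neighborSet x).ncard = 1} ⊆ {x : V | (T.neighborSet x).ncard = 1} :=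
      fun x hx => hx.2
    have := Set.ncard_le_ncard hsub (Set.toFinite _)
    rw [hSeq, Set.ncard_coe_finset] at this
    omega
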